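/- In R = K[x_1,...,x_6], let I = (x1x3, x1x4, x1x5, x1x6, x2x3, x2x4, x2x5, x2x6, x3x5, x3x6, x4x5, x4x6). Then (I^2 : x1x3x5) = (x_1,...,x_6); in particular the maximal ideal is an associated prime of I^2. -/

import Mathlib

open MvPolynomial

/-- The square-free monomial `∏_{i ∈ S} x_i`. -/
noncomputable def sqMon (K : Type*) [Field K] {n : ℕ} (S : Finset (Fin n)) :
    MvPolynomial (Fin n) K := ∏ i ∈ S, X i

/-- The square-free monomial ideal generated by the monomials with supports in `B`. -/
noncomputable def matIdeal (K : Type*) [Field K] {n : ℕ} (B : Finset (Finset (Fin n))) :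
    Ideal (MvPolynomial (Fin n) K) := Ideal.span (sqMon K '' ↑B)

/-- `B` is the set of bases (supports of the minimal generators) of a matroidal ideal of
degree `d`: all members have cardinality `d` and the matroid basis-exchange property holds
(this is the square-free case of the polymatroidal exchange property). -/
def IsMatroidalBases {n : ℕ} (d : ℕ) (B : Finset (Finset (Fin n))) : Prop :=
  B.Nonempty ∧ (∀ S ∈ B, S.card = d) ∧
    ∀ S ∈ B, ∀ T ∈ B, ∀ i ∈ S, i ∉ T → ∃ j ∈ T, j ∉ S ∧ insert j (S.erase i) ∈ B

/-- The graded maximal ideal `(x_1, …, x_n)`. -/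
noncomputable def maxIdeal (K : Type*) [Field K] (n : ℕ) : Ideal (MvPolynomial (Fin n) K) :=
  Ideal.span (Set.range X)

/-- `Ass(R/I^t)`. -/
noncomputable def AssPow (K : Type*) [Field K] {n : ℕ} (I : Ideal (MvPolynomial (Fin n) K))
    (t : ℕ) : Set (Ideal (MvPolynomial (Fin n) K)) :=
  associatedPrimes (MvPolynomial (Fin n) K) (MvPolynomial (Fin n) K ⧸ I ^ t)

/-- `p ∈ Ass^∞(I)`: `p` is an associated prime of all large powers of `I`. -/
def memAssInfty (K : Type*) [Field K] {n : ℕ} (I p : Ideal (MvPolynomial (Fin n) K)) : Prop :=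
  ∃ l, ∀ t, l ≤ t → p ∈ AssPow K I t

/-- `depth (R/I^t)`: the maximal length of a regular sequence on `R/I^t` consisting of
elements of the maximal ideal. -/
noncomputable def qDepth (K : Type*) [Field K] {n : ℕ} (I : Ideal (MvPolynomial (Fin n) K))
    (t : ℕ) : ℕ :=
  sSup {k | ∃ rs : List (MvPolynomial (Fin n) K), rs.length = k ∧
    (∀ r ∈ rs, r ∈ maxIdeal K n) ∧
    RingTheory.Sequence.IsRegular (MvPolynomial (Fin n) K ⧸ I ^ t) rs}

open Pointwise

namespace Stmt14Aux

noncomputable def expS {n : ℕ} (S : Finset (Fin n)) : Fin n →₀ ℕ :=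
  ∑ i ∈ S, Finsupp.single i 1

lemma sqMon_eq (K : Type*) [Field K] {n : ℕ} (S : Finset (Fin n)) :
    sqMon K S = monomial (expS S) (1 : K) := by
  classical
  induction S using Finset.induction with
  | empty => simp [sqMon, expS]
  | @insert a s h ih =>
    have he : expS (insert a s) = Finsupp.single a 1 + expS s := Finset.sum_insert h
    rw [sqMon, Finset.prod_insert h, ← sqMon, ih, he,
      show (X a : MvPolynomial (Fin n) K) = monomial (Finsupp.single a 1) 1 from rfl,
      monomial_mul, one_mul]

def wt {n : ℕ} (e : Fin n →₀ ℕ) : ℕ := ∑ j : Fin n, e j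

lemma wt_mono {n : ℕ} {e d : Fin n →₀ ℕ} (h : e ≤ d) : wt e ≤ wt d :=
  Finset.sum_le_sum fun j _ => h j

lemma wt_add {n : ℕ} (e d : Fin n →₀ ℕ) : wt (e + d) = wt e + wt d := by
  simp [wt, Finset.sum_add_distrib]

lemma wt_expS {n : ℕ} (S : Finset (Fin n)) : wt (expS S) = S.card := by
  classical
  simp only [wt, expS, Finsupp.finset_sum_apply, Finsupp.single_apply]
  rw [Finset.sum_comm]
  simp

lemma maxIdeal_eq (K : Type*) [Field K] (n : ℕ) :
    maxIdeal K n = RingHom.ker (constantCoeff (σ := Fin n) (R := K)) := by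
  ext f
  rw [maxIdeal, ← Set.image_univ, mem_ideal_span_X_image, RingHom.mem_ker]
  constructor
  · intro h
    by_contra hc
    obtain ⟨i, _, hi⟩ := h 0 (mem_support_iff.mpr hc)
    exact hi rfl
  · intro h m hm
    by_contra hc
    push_neg at hc
    have hm0 : m = 0 := Finsupp.ext fun i => hc i (Set.mem_univ i)
    rw [hm0] at hm
    exact (mem_support_iff.mp hm) h

lemma maxIdeal_isPrime (K : Type*) [Field K] (n : ℕ) : (maxIdeal K n).IsPrime := by
  rw [maxIdeal_eq]
  exact RingHom.ker_isPrime _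

lemma sqMon_pair (K : Type*) [Field K] {n : ℕ} {i j : Fin n} (h : i ≠ j) :
    sqMon K {i, j} = X i * X j := by
  rw [sqMon, Finset.prod_pair h]

end Stmt14Aux

open Stmt14Aux

/-- in `K[x₁,…,x₆]`, for the matroidal ideal
`I = (x₁x₃, x₁x₄, x₁x₅, x₁x₆, x₂x₃, x₂x₄, x₂x₅, x₂x₆, x₃x₅, x₃x₆, x₄x₅, x₄x₆)`
(variables 0-indexed) one has `(I² : x₁x₃x₅) = (x₁, …, x₆)`; in particular the maximal
ideal is an associated prime of `R/I²`. -/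
theorem stmt14 (K : Type*) [Field K] (I : Ideal (MvPolynomial (Fin 6) K))
    (hI : I = matIdeal K
      ({ {0, 2}, {0, 3}, {0, 4}, {0, 5}, {1, 2}, {1, 3}, {1, 4}, {1, 5},
         {2, 4}, {2, 5}, {3, 4}, {3, 5} } : Finset (Finset (Fin 6)))) :
    Submodule.colon (I ^ 2) (Ideal.span {sqMon K ({0, 2, 4} : Finset (Fin 6))}) =
      maxIdeal K 6 ∧
    maxIdeal K 6 ∈ AssPow K I 2 := by
  classical
  set B : Finset (Finset (Fin 6)) :=
    ({ {0, 2}, {0, 3}, {0, 4}, {0, 5}, {1, 2}, {1, 3}, {1, 4}, {1, 5},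
       {2, 4}, {2, 5}, {3, 4}, {3, 5} } : Finset (Finset (Fin 6))) with hB
  set u : MvPolynomial (Fin 6) K := sqMon K ({0, 2, 4} : Finset (Fin 6)) with hu
  -- membership of generators in I
  have hgen : ∀ S ∈ B, sqMon K S ∈ I := fun S hS => by
    rw [hI, matIdeal]; exact Ideal.subset_span (Set.mem_image_of_mem _ hS)
  -- u expanded
  have hu3 : u = X 0 * (X 2 * X 4) := by
    rw [hu, sqMon, show ({0,2,4} : Finset (Fin 6)) = insert 0 {2,4} from rfl,
      Finset.prod_insert (by decide), Finset.prod_pair (by decide)]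
  -- I^2 as a monomial ideal
  set E : Set (Fin 6 →₀ ℕ) := expS '' ↑B with hE
  have hIspan : I = Ideal.span ((fun e => monomial e (1 : K)) '' E) := by
    rw [hI, matIdeal, hE, Set.image_image]
    congr 1
    exact Set.image_congr' (fun S => sqMon_eq K S)
  have hI2 : I ^ 2 = Ideal.span ((fun e => monomial e (1 : K)) '' (E + E)) := by
    rw [pow_two, hIspan, Ideal.span_mul_span']
    congr 1
    ext x
    constructor
    · intro hx
      obtain ⟨p, hp, q, hq, rfl⟩ := Set.mem_mul.mp hx
      obtain ⟨a, ha, rfl⟩ := hp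
      obtain ⟨b, hb, rfl⟩ := hq
      refine ⟨a + b, Set.add_mem_add ha hb, ?_⟩
      show monomial (a + b) (1 : K) = monomial a (1 : K) * monomial b (1 : K)
      rw [monomial_mul, one_mul]
    · rintro ⟨e, he, rfl⟩
      obtain ⟨a, ha, b, hb, rfl⟩ := Set.mem_add.mp he
      refine Set.mem_mul.mpr ⟨_, Set.mem_image_of_mem (fun e => monomial e (1 : K)) ha,
        _, Set.mem_image_of_mem (fun e => monomial e (1 : K)) hb, ?_⟩
      show monomial a (1 : K) * monomial b (1 : K) = monomial (a + b) (1 : K)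
      rw [monomial_mul, one_mul]
  -- u ∉ I^2
  have hcard : ∀ S ∈ B, S.card = 2 := by decide
  have hunotin : u ∉ I ^ 2 := by
    intro hmem
    rw [hI2, mem_ideal_span_monomial_image] at hmem
    rw [hu, sqMon_eq] at hmem
    obtain ⟨e, he, hle⟩ := hmem (expS {0, 2, 4}) (by
      rw [support_monomial, if_neg (one_ne_zero)]; exact Finset.mem_singleton_self _)
    obtain ⟨a, ⟨S, hS, rfl⟩, b, ⟨T, hT, rfl⟩, rfl⟩ := he
    have h4 : wt (expS S + expS T) = 4 := by
      rw [wt_add, wt_expS, wt_expS, hcard S hS, hcard T hT]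
    have h3 : wt (expS ({0, 2, 4} : Finset (Fin 6))) = 3 := by rw [wt_expS]; decide
    have hle' : expS S + expS T ≤ expS ({0, 2, 4} : Finset (Fin 6)) := hle
    have := wt_mono hle'
    omega
  -- m ≤ colon
  have hforward : maxIdeal K 6 ≤ Submodule.colon (I ^ 2) (Ideal.span {u}) := by
    rw [maxIdeal, Ideal.span_le]
    rintro - ⟨i, rfl⟩
    rw [SetLike.mem_coe, Ideal.mem_colon_span_singleton]
    have hmul : ∀ S ∈ B, ∀ T ∈ B, sqMon K S * sqMon K T ∈ I ^ 2 := fun S hS T hT => by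
      rw [pow_two]; exact Ideal.mul_mem_mul (hgen S hS) (hgen T hT)
    fin_cases i
    · show X (0 : Fin 6) * u ∈ I ^ 2
      have heq : X (0 : Fin 6) * u = sqMon K {0, 2} * sqMon K {0, 4} := by
        rw [hu3, sqMon_pair K (by decide), sqMon_pair K (by decide)]; ring
      rw [heq]; exact hmul _ (by decide) _ (by decide)
    · show X (1 : Fin 6) * u ∈ I ^ 2
      have heq : X (1 : Fin 6) * u = sqMon K {0, 2} * sqMon K {1, 4} := by
        rw [hu3, sqMon_pair K (by decide), sqMon_pair K (by decide)]; ring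
      rw [heq]; exact hmul _ (by decide) _ (by decide)
    · show X (2 : Fin 6) * u ∈ I ^ 2
      have heq : X (2 : Fin 6) * u = sqMon K {0, 2} * sqMon K {2, 4} := by
        rw [hu3, sqMon_pair K (by decide), sqMon_pair K (by decide)]; ring
      rw [heq]; exact hmul _ (by decide) _ (by decide)
    · show X (3 : Fin 6) * u ∈ I ^ 2
      have heq : X (3 : Fin 6) * u = sqMon K {0, 2} * sqMon K {3, 4} := by
        rw [hu3, sqMon_pair K (by decide), sqMon_pair K (by decide)]; ring
      rw [heq]; exact hmul _ (by decide) _ (by decide)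
    · show X (4 : Fin 6) * u ∈ I ^ 2
      have heq : X (4 : Fin 6) * u = sqMon K {0, 4} * sqMon K {2, 4} := by
        rw [hu3, sqMon_pair K (by decide), sqMon_pair K (by decide)]; ring
      rw [heq]; exact hmul _ (by decide) _ (by decide)
    · show X (5 : Fin 6) * u ∈ I ^ 2
      have heq : X (5 : Fin 6) * u = sqMon K {0, 5} * sqMon K {2, 4} := by
        rw [hu3, sqMon_pair K (by decide), sqMon_pair K (by decide)]; ring
      rw [heq]; exact hmul _ (by decide) _ (by decide)
  -- colon ≤ m
  have hcolon : Submodule.colon (I ^ 2) (Ideal.span {u}) = maxIdeal K 6 := by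
    refine le_antisymm ?_ hforward
    intro f hf
    rw [Ideal.mem_colon_span_singleton] at hf
    rw [maxIdeal_eq, RingHom.mem_ker]
    by_contra hc
    set c : K := constantCoeff f with hcdef
    have hg : f - C c ∈ maxIdeal K 6 := by
      rw [maxIdeal_eq, RingHom.mem_ker]; simp [hcdef]
    have hg2 : (f - C c) * u ∈ I ^ 2 :=
      Ideal.mem_colon_span_singleton.mp (hforward hg)
    have hCc : C c * u ∈ I ^ 2 := by
      have : C c * u = f * u - (f - C c) * u := by ring
      rw [this]; exact Ideal.sub_mem _ hf hg2
    have : u ∈ I ^ 2 := by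
      have := Ideal.mul_mem_left _ (C c⁻¹) hCc
      rwa [← mul_assoc, ← C_mul, inv_mul_cancel₀ hc, C_1, one_mul] at this
    exact hunotin this
  refine ⟨hcolon, isAssociatedPrime_iff.mpr ⟨maxIdeal_isPrime K 6, Ideal.Quotient.mk (I ^ 2) u, ?_⟩⟩
  ext r
  rw [Submodule.mem_colon_singleton, Submodule.mem_bot, ← hcolon, Ideal.mem_colon_span_singleton]
  have hsmul : r • Ideal.Quotient.mk (I ^ 2) u = Ideal.Quotient.mk (I ^ 2) (r * u) := by
    rw [← Ideal.Quotient.mk_eq_mk, ← Ideal.Quotient.mk_eq_mk, ← Submodule.Quotient.mk_smul,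
      smul_eq_mul]
  rw [hsmul, Ideal.Quotient.eq_zero_iff_mem]
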